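/- Let C ⊆ ℝ be an interval, x₁,…,xₙ ∈ C, φ : C → ℝ convex, and B = [b_{ij}], C' = [c_{ij}] two n×n doubly stochastic matrices. Then φ((x₁+⋯+xₙ)/n) ≤ (1/n)∑_{i=1}^n A(φ; ∑_{j=1}^n b_{ij}xⱼ, ∑_{j=1}^n c_{ij}xⱼ) ≤ (φ(x₁)+⋯+φ(xₙ))/n, where A(f;a,b) = (1/(b−a))∫_a^b f(x) dx for a ≠ b and A(f;a,a) = f(a). -/

import Mathlib

open Finset MeasureTheory

/-- The arithmetic (integral) mean `A(f;a,b)` of a function `f` over the interval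
with endpoints `a` and `b`, with `A(f;a,a) = f a`. -/
noncomputable def intMean (f : ℝ → ℝ) (a b : ℝ) : ℝ :=
  if a = b then f a else (b - a)⁻¹ * ∫ x in a..b, f x

lemma intMean_symm (f : ℝ → ℝ) (a b : ℝ) : intMean f b a = intMean f a b := by
  rcases eq_or_ne a b with rfl | h
  · rfl
  · rw [intMean, intMean, if_neg h, if_neg (Ne.symm h), intervalIntegral.integral_symm]
    rw [show a - b = -(b - a) by ring, inv_neg, neg_mul_neg]

/-- A convex function is interval integrable on a subinterval of its domain. -/
lemma convexOn_intervalIntegrable {C : Set ℝ} (hC : Convex ℝ C) {φ : ℝ → ℝ}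
    (hφ : ConvexOn ℝ C φ) {a b : ℝ} (ha : a ∈ C) (hb : b ∈ C) (hab : a < b) :
    IntervalIntegrable φ volume a b := by
  have hIcc : Set.Icc a b ⊆ C := hC.ordConnected.out ha hb
  -- continuity on the open interval
  have hIoo : Set.Ioo a b ⊆ interior C := by
    rw [← interior_Icc]; exact interior_mono hIcc
  have hcont : ContinuousOn φ (Set.Ioo a b) :=
    hφ.continuousOn_interior.mono hIoo
  -- bounds
  set M : ℝ := max (φ a) (φ b) with hM
  set m : ℝ := (a + b) / 2 with hm
  have hmem : ∀ t ∈ Set.Icc a b, t ∈ C := fun t ht => hIcc ht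
  have hub : ∀ t ∈ Set.Icc a b, φ t ≤ M := by
    intro t ht
    exact hφ.le_on_segment ha hb (by rwa [segment_eq_Icc hab.le])
  have hlb : ∀ t ∈ Set.Icc a b, 2 * φ m - M ≤ φ t := by
    intro t ht
    have ht' : a + b - t ∈ Set.Icc a b := by
      constructor <;> [linarith [ht.2]; linarith [ht.1]]
    have h2 : φ ((1/2 : ℝ) • t + (1/2 : ℝ) • (a + b - t)) ≤
        (1/2 : ℝ) • φ t + (1/2 : ℝ) • φ (a + b - t) :=
      hφ.2 (hmem t ht) (hmem _ ht') (by norm_num) (by norm_num) (by norm_num)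
    have hmid : (1/2 : ℝ) • t + (1/2 : ℝ) • (a + b - t) = m := by
      simp only [smul_eq_mul, hm]; ring
    rw [hmid] at h2
    have := hub _ ht'
    simp only [smul_eq_mul] at h2
    linarith
  set K : ℝ := max |M| |2 * φ m - M| with hK
  have hbdd : ∀ t ∈ Set.Icc a b, ‖φ t‖ ≤ K := by
    intro t ht
    rw [Real.norm_eq_abs, abs_le]
    constructor
    · have : -(|2 * φ m - M|) ≤ 2 * φ m - M := neg_abs_le _
      have := hlb t ht
      have : -K ≤ -(|2 * φ m - M|) := neg_le_neg (le_max_right _ _)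
      linarith [neg_abs_le (2 * φ m - M), hlb t ht]
    · calc φ t ≤ M := hub t ht
        _ ≤ |M| := le_abs_self _
        _ ≤ K := le_max_left _ _
  -- integrability
  rw [intervalIntegrable_iff_integrableOn_Ioo_of_le hab.le]
  have hmeas : AEStronglyMeasurable φ (volume.restrict (Set.Ioo a b)) :=
    hcont.aestronglyMeasurable measurableSet_Ioo
  refine Integrable.mono' (g := fun _ => K) ?_ hmeas ?_
  · exact integrableOn_const measure_Ioo_lt_top.ne
  · exact (ae_restrict_iff' measurableSet_Ioo).2 (Filter.Eventually.of_forall fun t ht =>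
      hbdd t (Set.Ioo_subset_Icc_self ht))

/-- Hermite–Hadamard inequality for the two-sided mean, ordered version. -/
lemma hermite_hadamard_le {C : Set ℝ} (hC : Convex ℝ C) {φ : ℝ → ℝ}
    (hφ : ConvexOn ℝ C φ) {a b : ℝ} (ha : a ∈ C) (hb : b ∈ C) (hab : a ≤ b) :
    φ ((a + b) / 2) ≤ intMean φ a b ∧ intMean φ a b ≤ (φ a + φ b) / 2 := by
  rcases eq_or_lt_of_le hab with rfl | hlt
  · constructor <;> simp [intMean]
  have hIcc : Set.Icc a b ⊆ C := hC.ordConnected.out ha hb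
  have hba : (0:ℝ) < b - a := by linarith
  have hInt : IntervalIntegrable φ volume a b := convexOn_intervalIntegrable hC hφ ha hb hlt
  have hne : a ≠ b := ne_of_lt hlt
  rw [intMean, if_neg hne]
  constructor
  · -- lower bound
    have hInt' : IntervalIntegrable (fun t => φ (a + b - t)) volume a b := by
      have := (hInt.comp_sub_left (a + b)).symm
      simpa using this
    have hptwise : ∀ t ∈ Set.Icc a b, φ ((a + b) / 2) ≤ (φ t + φ (a + b - t)) / 2 := by
      intro t ht
      have ht' : a + b - t ∈ Set.Icc a b := by
        constructor <;> [linarith [ht.2]; linarith [ht.1]]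
      have h2 : φ ((1/2 : ℝ) • t + (1/2 : ℝ) • (a + b - t)) ≤
          (1/2 : ℝ) • φ t + (1/2 : ℝ) • φ (a + b - t) :=
        hφ.2 (hIcc ht) (hIcc ht') (by norm_num) (by norm_num) (by norm_num)
      have hmid : (1/2 : ℝ) • t + (1/2 : ℝ) • (a + b - t) = (a + b) / 2 := by
        simp only [smul_eq_mul]; ring
      rw [hmid] at h2
      simp only [smul_eq_mul] at h2
      linarith
    have hmono : (∫ t in a..b, φ ((a + b) / 2)) ≤ ∫ t in a..b, (φ t + φ (a + b - t)) / 2 := by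
      apply intervalIntegral.integral_mono_on hlt.le intervalIntegrable_const
        (((hInt.add hInt').div_const 2)) hptwise
    have hrefl : (∫ t in a..b, φ (a + b - t)) = ∫ t in a..b, φ t := by
      have := intervalIntegral.integral_comp_sub_left (a := a) (b := b) φ (a + b)
      simpa using this
    rw [intervalIntegral.integral_const, smul_eq_mul] at hmono
    have hsplit : (∫ t in a..b, (φ t + φ (a + b - t)) / 2)
        = ((∫ t in a..b, φ t) + ∫ t in a..b, φ (a + b - t)) / 2 := by
      rw [intervalIntegral.integral_div, intervalIntegral.integral_add hInt hInt']
    rw [hsplit, hrefl] at hmono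
    rw [le_inv_mul_iff₀ hba]
    linarith
  · -- upper bound
    have hptwise : ∀ t ∈ Set.Icc a b, φ t ≤ φ a + (t - a) * ((φ b - φ a) / (b - a)) := by
      intro t ht
      have hα : (0:ℝ) ≤ (b - t) / (b - a) := div_nonneg (by linarith [ht.2]) hba.le
      have hβ : (0:ℝ) ≤ (t - a) / (b - a) := div_nonneg (by linarith [ht.1]) hba.le
      have hαβ : (b - t) / (b - a) + (t - a) / (b - a) = 1 := by
        field_simp
        ring
      have h2 : φ (((b - t) / (b - a)) • a + ((t - a) / (b - a)) • b) ≤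
          ((b - t) / (b - a)) • φ a + ((t - a) / (b - a)) • φ b :=
        hφ.2 ha hb hα hβ hαβ
      have hcomb : ((b - t) / (b - a)) • a + ((t - a) / (b - a)) • b = t := by
        simp only [smul_eq_mul]; field_simp; ring
      rw [hcomb] at h2
      simp only [smul_eq_mul] at h2
      have : (b - t) / (b - a) * φ a + (t - a) / (b - a) * φ b
          = φ a + (t - a) * ((φ b - φ a) / (b - a)) := by
        field_simp; ring
      linarith [h2, this.ge]
    have hg : IntervalIntegrable (fun t => φ a + (t - a) * ((φ b - φ a) / (b - a)))
        volume a b := by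
      apply Continuous.intervalIntegrable; continuity
    have hmono : (∫ t in a..b, φ t) ≤
        ∫ t in a..b, (φ a + (t - a) * ((φ b - φ a) / (b - a))) :=
      intervalIntegral.integral_mono_on hlt.le hInt hg hptwise
    have hcalc : (∫ t in a..b, (φ a + (t - a) * ((φ b - φ a) / (b - a))))
        = (b - a) * ((φ a + φ b) / 2) := by
      have h1 : (∫ t in a..b, (t - a)) = (b - a)^2 / 2 := by
        have := intervalIntegral.integral_comp_sub_right (a := a) (b := b) (fun t => t) a
        rw [this, integral_id]
        ring
      rw [intervalIntegral.integral_add intervalIntegrable_const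
        ((Continuous.intervalIntegrable (by continuity) a b)),
        intervalIntegral.integral_const, intervalIntegral.integral_mul_const, h1]
      field_simp
      ring
    rw [hcalc] at hmono
    rw [inv_mul_le_iff₀ hba]
    linarith
  
/-- Hermite–Hadamard inequality, unordered version. -/
lemma hermite_hadamard {C : Set ℝ} (hC : Convex ℝ C) {φ : ℝ → ℝ}
    (hφ : ConvexOn ℝ C φ) {a b : ℝ} (ha : a ∈ C) (hb : b ∈ C) :
    φ ((a + b) / 2) ≤ intMean φ a b ∧ intMean φ a b ≤ (φ a + φ b) / 2 := by
  rcases le_total a b with h | h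
  · exact hermite_hadamard_le hC hφ ha hb h
  · have := hermite_hadamard_le hC hφ hb ha h
    rw [intMean_symm] at this
    constructor
    · rw [show a + b = b + a by ring]; exact this.1
    · rw [show φ a + φ b = φ b + φ a by ring]; exact this.2

/-- Hermite–Hadamard type refinement of Jensen's inequality with equal weights via
two doubly stochastic matrices, on an interval of `ℝ`. -/
theorem jensen_refinement_two_doubly_stochastic_intMean
    {n : ℕ} (hn : 0 < n)
    (C : Set ℝ) (hC : Convex ℝ C) (x : Fin n → ℝ) (hx : ∀ j, x j ∈ C)
    (φ : ℝ → ℝ) (hφ : ConvexOn ℝ C φ)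
    (b c : Fin n → Fin n → ℝ)
    (hb0 : ∀ i j, 0 ≤ b i j) (hbrow : ∀ i, ∑ j, b i j = 1) (hbcol : ∀ j, ∑ i, b i j = 1)
    (hc0 : ∀ i j, 0 ≤ c i j) (hcrow : ∀ i, ∑ j, c i j = 1) (hccol : ∀ j, ∑ i, c i j = 1) :
    φ ((∑ j, x j) / n) ≤
        (n : ℝ)⁻¹ * ∑ i, intMean φ (∑ j, b i j * x j) (∑ j, c i j * x j) ∧
      (n : ℝ)⁻¹ * ∑ i, intMean φ (∑ j, b i j * x j) (∑ j, c i j * x j) ≤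
        (∑ j, φ (x j)) / n := by
  have hnR : (0:ℝ) < n := Nat.cast_pos.2 hn
  set u : Fin n → ℝ := fun i => ∑ j, b i j * x j with hu_def
  set v : Fin n → ℝ := fun i => ∑ j, c i j * x j with hv_def
  have hu : ∀ i, u i ∈ C := by
    intro i
    have := hC.sum_mem (t := Finset.univ) (w := b i) (z := x)
      (fun j _ => hb0 i j) (hbrow i) (fun j _ => hx j)
    simpa [hu_def, smul_eq_mul] using this
  have hv : ∀ i, v i ∈ C := by
    intro i
    have := hC.sum_mem (t := Finset.univ) (w := c i) (z := x)
      (fun j _ => hc0 i j) (hcrow i) (fun j _ => hx j)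
    simpa [hv_def, smul_eq_mul] using this
  have hm : ∀ i, (u i + v i) / 2 ∈ C := by
    intro i
    have := hC (hu i) (hv i) (by norm_num : (0:ℝ) ≤ 1/2) (by norm_num : (0:ℝ) ≤ 1/2)
      (by norm_num)
    simpa [smul_eq_mul] using (by
      have h : (1/2 : ℝ) • u i + (1/2 : ℝ) • v i = (u i + v i) / 2 := by
        simp [smul_eq_mul]; ring
      rw [h] at this; exact this)
  have hsumu : ∑ i, u i = ∑ j, x j := by
    simp only [hu_def]
    rw [Finset.sum_comm]
    simp [← Finset.sum_mul, hbcol]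
  have hsumv : ∑ i, v i = ∑ j, x j := by
    simp only [hv_def]
    rw [Finset.sum_comm]
    simp [← Finset.sum_mul, hccol]
  -- HH for each i
  have hHH := fun i => hermite_hadamard hC hφ (hu i) (hv i)
  constructor
  · -- lower bound
    have hwsum : ∑ _i : Fin n, (n:ℝ)⁻¹ = 1 := by
      rw [Finset.sum_const, Finset.card_univ, Fintype.card_fin, nsmul_eq_mul]
      field_simp
    have hjensen : φ (∑ i, (n:ℝ)⁻¹ • ((u i + v i) / 2)) ≤
        ∑ i, (n:ℝ)⁻¹ • φ ((u i + v i) / 2) :=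
      hφ.map_sum_le (fun i _ => by positivity) hwsum (fun i _ => hm i)
    have heq : (∑ i, (n:ℝ)⁻¹ • ((u i + v i) / 2)) = (∑ j, x j) / n := by
      simp only [smul_eq_mul, ← Finset.mul_sum]
      rw [show (∑ i, (u i + v i) / 2) = ((∑ i, u i) + ∑ i, v i) / 2 by
        rw [← Finset.sum_add_distrib, ← Finset.sum_div]]
      rw [hsumu, hsumv]
      field_simp
      ring
    rw [heq] at hjensen
    refine hjensen.trans ?_
    rw [Finset.mul_sum]
    apply Finset.sum_le_sum
    intro i _
    simp only [smul_eq_mul]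
    have := (hHH i).1
    have hnn : (0:ℝ) ≤ (n:ℝ)⁻¹ := by positivity
    exact mul_le_mul_of_nonneg_left this hnn
  · -- upper bound
    have hstep : ∀ i, intMean φ (u i) (v i) ≤
        ((∑ j, b i j * φ (x j)) + ∑ j, c i j * φ (x j)) / 2 := by
      intro i
      refine (hHH i).2.trans ?_
      have h1 : φ (u i) ≤ ∑ j, b i j * φ (x j) := by
        have := hφ.map_sum_le (w := b i) (p := x) (fun j _ => hb0 i j) (hbrow i)
          (fun j _ => hx j)
        simpa [hu_def, smul_eq_mul] using this
      have h2 : φ (v i) ≤ ∑ j, c i j * φ (x j) := by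
        have := hφ.map_sum_le (w := c i) (p := x) (fun j _ => hc0 i j) (hcrow i)
          (fun j _ => hx j)
        simpa [hv_def, smul_eq_mul] using this
      linarith
    have hsum : ∑ i, intMean φ (u i) (v i) ≤ ∑ j, φ (x j) := by
      calc ∑ i, intMean φ (u i) (v i)
          ≤ ∑ i, ((∑ j, b i j * φ (x j)) + ∑ j, c i j * φ (x j)) / 2 :=
            Finset.sum_le_sum fun i _ => hstep i
        _ = ((∑ i, ∑ j, b i j * φ (x j)) + ∑ i, ∑ j, c i j * φ (x j)) / 2 := by
            rw [← Finset.sum_add_distrib, ← Finset.sum_div]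
        _ = ∑ j, φ (x j) := by
            rw [Finset.sum_comm (f := fun i j => b i j * φ (x j)),
              Finset.sum_comm (f := fun i j => c i j * φ (x j))]
            simp [← Finset.sum_mul, hbcol, hccol]
    calc (n : ℝ)⁻¹ * ∑ i, intMean φ (u i) (v i)
        ≤ (n : ℝ)⁻¹ * ∑ j, φ (x j) := by
          apply mul_le_mul_of_nonneg_left hsum (by positivity)
      _ = (∑ j, φ (x j)) / n := by rw [div_eq_inv_mul]
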